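/- Let U ⊆ ℝⁿ be open, Φ : U → GL(n,ℝ) a C¹ map, and q : [0,T] → U a C¹ curve. If δq : [0,T] → ℝⁿ is a C¹ variation and η(t) := Φ(q(t))⁻¹ δq(t), ξ(t) := Φ(q(t))⁻¹ q̇(t), then D(Φ(q)⁻¹)·δq·q̇ + Φ(q)⁻¹ (d/dt δq) = η̇ + [ξ, η]_q, where [u,v]_q = Φ(q)⁻¹(DΦ(q)(Φ(q)u) v − DΦ(q)(Φ(q)v) u). -/

import Mathlib

/-- Along a C¹ curve `q` with C¹ variation `δq`, setting
`η(t) = Φ(q(t))⁻¹ δq(t)` and `ξ(t) = Φ(q(t))⁻¹ q̇(t)`, one has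
`D(Φ(q)⁻¹)·δq·q̇ + Φ(q)⁻¹ (d/dt δq) = η̇ + [ξ, η]_q`, where
`[u,v]_q = Φ(q)⁻¹(DΦ(q)(Φ(q)u) v − DΦ(q)(Φ(q)v) u)`. -/
theorem trivialized_variation_identity
    (n : ℕ)
    (Φ Ψ : (Fin n → ℝ) → ((Fin n → ℝ) →L[ℝ] (Fin n → ℝ)))
    (hΦ : ContDiff ℝ 1 Φ) (hΨ : ContDiff ℝ 1 Ψ)
    (hinv : ∀ x, (Φ x).comp (Ψ x) = ContinuousLinearMap.id ℝ (Fin n → ℝ) ∧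
                 (Ψ x).comp (Φ x) = ContinuousLinearMap.id ℝ (Fin n → ℝ))
    (q δq : ℝ → (Fin n → ℝ)) (hq : ContDiff ℝ 1 q) (hδq : ContDiff ℝ 1 δq) :
    let br : (Fin n → ℝ) → (Fin n → ℝ) → (Fin n → ℝ) → (Fin n → ℝ) :=
      fun x u v => Ψ x ((fderiv ℝ Φ x (Φ x u)) v - (fderiv ℝ Φ x (Φ x v)) u)
    let η : ℝ → (Fin n → ℝ) := fun t => Ψ (q t) (δq t)
    let ξ : ℝ → (Fin n → ℝ) := fun t => Ψ (q t) (deriv q t)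
    ∀ t : ℝ,
      (fderiv ℝ Ψ (q t) (δq t)) (deriv q t) + Ψ (q t) (deriv δq t)
        = deriv η t + br (q t) (ξ t) (η t) := by
  intro br η ξ t
  have hΦd : Differentiable ℝ Φ := hΦ.differentiable one_ne_zero
  have hΨd : Differentiable ℝ Ψ := hΨ.differentiable one_ne_zero
  have hqd : Differentiable ℝ q := hq.differentiable one_ne_zero
  have hδd : Differentiable ℝ δq := hδq.differentiable one_ne_zero
  have hΦΨ : ∀ x v, Φ x (Ψ x v) = v := by
    intro x v
    have := congrArg (fun L => L v) (hinv x).1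
    simpa using this
  -- key identity: DΨ(x)(w)(v) = - Ψ x (DΦ(x)(w)(Ψ x v))
  have key : ∀ x w v, (fderiv ℝ Ψ x w) v = - Ψ x ((fderiv ℝ Φ x w) (Ψ x v)) := by
    intro x w v
    have hu : HasFDerivAt (fun y => Φ y (Ψ x v)) ((fderiv ℝ Φ x).flip (Ψ x v)) x := by
      have h := (hΦd x).hasFDerivAt.clm_apply (hasFDerivAt_const (Ψ x v) x)
      simpa using h
    have hd := (hΨd x).hasFDerivAt.clm_apply hu
    have hconst : (fun y => Ψ y (Φ y (Ψ x v))) = fun _ => Ψ x v := by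
      funext y
      have h1 := congrArg (fun L => L (Ψ x v)) (hinv y).2
      simpa using h1
    rw [hconst] at hd
    have h0 := hd.unique (hasFDerivAt_const (Ψ x v) x)
    have h2 := congrArg (fun L : (Fin n → ℝ) →L[ℝ] (Fin n → ℝ) => L w) h0
    simp only [ContinuousLinearMap.add_apply, ContinuousLinearMap.coe_comp',
      Function.comp_apply, ContinuousLinearMap.flip_apply,
      ContinuousLinearMap.zero_apply, hΦΨ] at h2
    -- h2 : Ψ x (fderiv Φ x w (Ψ x v)) + fderiv Ψ x w v = 0
    linear_combination (norm := abel) h2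
  -- derivative of η
  have hη : HasDerivAt η ((fderiv ℝ Ψ (q t) (deriv q t)) (δq t) + Ψ (q t) (deriv δq t)) t := by
    have hc : HasDerivAt (fun s => Ψ (q s)) (fderiv ℝ Ψ (q t) (deriv q t)) t :=
      (hΨd (q t)).hasFDerivAt.comp_hasDerivAt t (hqd t).hasDerivAt
    exact hc.clm_apply (hδd t).hasDerivAt
  rw [hη.deriv]
  show _ = _ + Ψ (q t) ((fderiv ℝ Φ (q t) (Φ (q t) (ξ t))) (η t)
      - (fderiv ℝ Φ (q t) (Φ (q t) (η t))) (ξ t))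
  have e1 : Φ (q t) (ξ t) = deriv q t := hΦΨ _ _
  have e2 : Φ (q t) (η t) = δq t := hΦΨ _ _
  rw [e1, e2, map_sub, key (q t) (δq t) (deriv q t), key (q t) (deriv q t) (δq t)]
  show -Ψ (q t) ((fderiv ℝ Φ (q t) (δq t)) (ξ t)) + Ψ (q t) (deriv δq t)
      = -Ψ (q t) ((fderiv ℝ Φ (q t) (deriv q t)) (η t)) + Ψ (q t) (deriv δq t)
      + (Ψ (q t) ((fderiv ℝ Φ (q t) (deriv q t)) (η t))
        - Ψ (q t) ((fderiv ℝ Φ (q t) (δq t)) (ξ t)))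
  abel
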